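/- With a'₁₂ = (1/2) Σ_{i,j} sgn(i−j) e_{ij} ⊗ e_{ji} and b'₁₂ = −(1/2) Σ_{i,j} sgn(i−j) e_{ij} ⊗ e_{ij} − (1/2) Σ_{i,j} e_{ij} ⊗ e_{ij}, the adjoint Yang–Baxter equation with vanishing right-hand side holds: [a'₁₂, b'₁₃] + [a'₁₂, b'₂₃] + [b'₁₃, b'₂₃] = 0. -/

import Mathlib

open Matrix BigOperators
open scoped Kronecker

/-- Elementary matrix `e_{ij}`. -/
noncomputable def E (n : ℕ) (i j : Fin n) : Matrix (Fin n) (Fin n) ℂ :=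
  Matrix.single i j 1

/-- `sgn(i - j)` as a complex number, with `sgn(0) = 0`. -/
def sg (n : ℕ) (i j : Fin n) : ℂ := ((((i : ℤ) - (j : ℤ)).sign : ℤ) : ℂ)

/-- Triple Kronecker product, acting on `(ℂ^n)^{⊗3}`. -/
noncomputable def K3 (n : ℕ) (A B C : Matrix (Fin n) (Fin n) ℂ) :
    Matrix ((Fin n × Fin n) × Fin n) ((Fin n × Fin n) × Fin n) ℂ :=
  A ⊗ₖ B ⊗ₖ C

/-- Degasperis–Procesi `a' = (1/2) Σ sgn(i−j) e_{ij} ⊗ e_{ji}` in legs (1,2). -/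
noncomputable def a'12 (n : ℕ) :
    Matrix ((Fin n × Fin n) × Fin n) ((Fin n × Fin n) × Fin n) ℂ :=
  (1/2 : ℂ) • ∑ i : Fin n, ∑ j : Fin n, sg n i j • K3 n (E n i j) (E n j i) 1

/-- Degasperis–Procesi
`b' = −(1/2) Σ sgn(i−j) e_{ij} ⊗ e_{ij} − (1/2) Σ e_{ij} ⊗ e_{ij}` in legs (1,3). -/
noncomputable def b'13 (n : ℕ) :
    Matrix ((Fin n × Fin n) × Fin n) ((Fin n × Fin n) × Fin n) ℂ :=
  (-(1/2) : ℂ) • ∑ i : Fin n, ∑ j : Fin n, sg n i j • K3 n (E n i j) 1 (E n i j)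
  + (-(1/2) : ℂ) • ∑ i : Fin n, ∑ j : Fin n, K3 n (E n i j) 1 (E n i j)

/-- The same `b'` placed in legs (2,3). -/
noncomputable def b'23 (n : ℕ) :
    Matrix ((Fin n × Fin n) × Fin n) ((Fin n × Fin n) × Fin n) ℂ :=
  (-(1/2) : ℂ) • ∑ i : Fin n, ∑ j : Fin n, sg n i j • K3 n 1 (E n i j) (E n i j)
  + (-(1/2) : ℂ) • ∑ i : Fin n, ∑ j : Fin n, K3 n 1 (E n i j) (E n i j)

lemma sum_sum_add' (n : ℕ) (X Y : Fin n → Fin n → ℂ) :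
    (∑ i, ∑ j, X i j) + (∑ i, ∑ j, Y i j) = ∑ i, ∑ j, (X i j + Y i j) := by
  rw [← Finset.sum_add_distrib]
  exact Finset.sum_congr rfl fun i _ => (Finset.sum_add_distrib).symm

lemma a'12_apply (n : ℕ) (p q r p' q' r' : Fin n) :
    a'12 n ((p,q),r) ((p',q'),r') =
      if q = p' ∧ p = q' ∧ r = r' then (1/2) * sg n p q else 0 := by
  simp only [a'12, K3, E, Matrix.smul_apply, Matrix.sum_apply, kroneckerMap_apply,
    Matrix.single, Matrix.of_apply, Matrix.one_apply, smul_eq_mul]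
  rw [Finset.sum_eq_single p]
  · rw [Finset.sum_eq_single p']
    · by_cases h1 : q = p' <;> by_cases h2 : p = q' <;> by_cases h3 : r = r' <;>
        simp [h1, h2, h3, and_comm] <;> ring_nf <;> try tauto
    · intro b _ hb; simp [hb, Ne.symm hb]
    · simp
  · intro b _ hb; simp [hb, Ne.symm hb]
  · simp

lemma b'13_apply (n : ℕ) (p q r p' q' r' : Fin n) :
    b'13 n ((p,q),r) ((p',q'),r') =
      if q = q' ∧ p = r ∧ p' = r' then -(1/2) * (sg n p p' + 1) else 0 := by
  simp only [b'13, K3, E, Matrix.add_apply, Matrix.smul_apply, Matrix.sum_apply,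
    kroneckerMap_apply, Matrix.single, Matrix.of_apply, Matrix.one_apply,
    smul_eq_mul]
  rw [← mul_add, sum_sum_add']
  rw [Finset.sum_eq_single p]
  · rw [Finset.sum_eq_single p']
    · by_cases h1 : q = q' <;> by_cases h2 : p = r <;> by_cases h3 : p' = r' <;>
        simp [h1, h2, h3, and_comm] <;> ring_nf <;> try tauto
    · intro b _ hb; simp [hb, Ne.symm hb]
    · simp
  · intro b _ hb; simp [hb, Ne.symm hb]
  · simp

lemma b'23_apply (n : ℕ) (p q r p' q' r' : Fin n) :
    b'23 n ((p,q),r) ((p',q'),r') =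
      if p = p' ∧ q = r ∧ q' = r' then -(1/2) * (sg n q q' + 1) else 0 := by
  simp only [b'23, K3, E, Matrix.add_apply, Matrix.smul_apply, Matrix.sum_apply,
    kroneckerMap_apply, Matrix.single, Matrix.of_apply, Matrix.one_apply,
    smul_eq_mul]
  rw [← mul_add, sum_sum_add']
  rw [Finset.sum_eq_single q]
  · rw [Finset.sum_eq_single q']
    · by_cases h1 : p = p' <;> by_cases h2 : q = r <;> by_cases h3 : q' = r' <;>
        simp [h1, h2, h3, and_comm] <;> ring_nf <;> try tauto
    · intro b _ hb; simp [hb, Ne.symm hb]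
    · simp
  · intro b _ hb; simp [hb, Ne.symm hb]
  · simp

lemma AB_apply (n : ℕ) (p q r p' q' r' : Fin n) :
    (a'12 n * b'13 n) ((p,q),r) ((p',q'),r') =
      if r = q ∧ q' = p ∧ r' = p' then -(1/4) * (sg n p q * (sg n q p' + 1)) else 0 := by
  rw [Matrix.mul_apply]
  simp only [Fintype.sum_prod_type, a'12_apply, b'13_apply, ite_and, mul_ite, ite_mul,
    zero_mul, mul_zero, Finset.sum_ite_eq, Finset.sum_ite_eq', Finset.mem_univ, if_true]
  by_cases h1 : r = q <;> by_cases h2 : q' = p <;> by_cases h3 : r' = p' <;>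
    simp [h1, h2, h3, eq_comm] <;> (try split_ifs) <;> (try simp_all) <;> (try ring) <;> grind

lemma BA_apply (n : ℕ) (p q r p' q' r' : Fin n) :
    (b'13 n * a'12 n) ((p,q),r) ((p',q'),r') =
      if r = p ∧ p' = q ∧ r' = q' then -(1/4) * ((sg n p q' + 1) * sg n q' q) else 0 := by
  rw [Matrix.mul_apply]
  simp only [Fintype.sum_prod_type, a'12_apply, b'13_apply, ite_and, mul_ite, ite_mul,
    zero_mul, mul_zero, Finset.sum_ite_eq, Finset.sum_ite_eq', Finset.mem_univ, if_true]
  by_cases h1 : r = p <;> by_cases h2 : p' = q <;> by_cases h3 : r' = q' <;>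
    simp [h1, h2, h3, eq_comm] <;> (try split_ifs) <;> (try simp_all) <;> (try ring) <;> grind

lemma AC_apply (n : ℕ) (p q r p' q' r' : Fin n) :
    (a'12 n * b'23 n) ((p,q),r) ((p',q'),r') =
      if r = p ∧ p' = q ∧ r' = q' then -(1/4) * (sg n p q * (sg n p q' + 1)) else 0 := by
  rw [Matrix.mul_apply]
  simp only [Fintype.sum_prod_type, a'12_apply, b'23_apply, ite_and, mul_ite, ite_mul,
    zero_mul, mul_zero, Finset.sum_ite_eq, Finset.sum_ite_eq', Finset.mem_univ, if_true]
  by_cases h1 : r = p <;> by_cases h2 : p' = q <;> by_cases h3 : r' = q' <;>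
    simp [h1, h2, h3, eq_comm] <;> (try split_ifs) <;> (try simp_all) <;> (try ring) <;> grind

lemma CA_apply (n : ℕ) (p q r p' q' r' : Fin n) :
    (b'23 n * a'12 n) ((p,q),r) ((p',q'),r') =
      if r = q ∧ q' = p ∧ r' = p' then -(1/4) * ((sg n q p' + 1) * sg n p p') else 0 := by
  rw [Matrix.mul_apply]
  simp only [Fintype.sum_prod_type, a'12_apply, b'23_apply, ite_and, mul_ite, ite_mul,
    zero_mul, mul_zero, Finset.sum_ite_eq, Finset.sum_ite_eq', Finset.mem_univ, if_true]
  by_cases h1 : r = q <;> by_cases h2 : q' = p <;> by_cases h3 : r' = p' <;>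
    simp [h1, h2, h3, eq_comm] <;> (try split_ifs) <;> (try simp_all) <;> (try ring) <;> grind

lemma BC_apply (n : ℕ) (p q r p' q' r' : Fin n) :
    (b'13 n * b'23 n) ((p,q),r) ((p',q'),r') =
      if r = p ∧ p' = q ∧ r' = q' then (1/4) * ((sg n p q + 1) * (sg n q q' + 1)) else 0 := by
  rw [Matrix.mul_apply]
  simp only [Fintype.sum_prod_type, b'13_apply, b'23_apply, ite_and, mul_ite, ite_mul,
    zero_mul, mul_zero, Finset.sum_ite_eq, Finset.sum_ite_eq', Finset.mem_univ, if_true]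
  by_cases h1 : r = p <;> by_cases h2 : p' = q <;> by_cases h3 : r' = q' <;>
    simp [h1, h2, h3, eq_comm] <;> (try split_ifs) <;> (try simp_all) <;> (try ring) <;> grind

lemma CB_apply (n : ℕ) (p q r p' q' r' : Fin n) :
    (b'23 n * b'13 n) ((p,q),r) ((p',q'),r') =
      if r = q ∧ q' = p ∧ r' = p' then (1/4) * ((sg n q p + 1) * (sg n p p' + 1)) else 0 := by
  rw [Matrix.mul_apply]
  simp only [Fintype.sum_prod_type, b'13_apply, b'23_apply, ite_and, mul_ite, ite_mul,
    zero_mul, mul_zero, Finset.sum_ite_eq, Finset.sum_ite_eq', Finset.mem_univ, if_true]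
  by_cases h1 : r = q <;> by_cases h2 : q' = p <;> by_cases h3 : r' = p' <;>
    simp [h1, h2, h3, eq_comm] <;> (try split_ifs) <;> (try simp_all) <;> (try ring) <;> grind

lemma key1 (x y z : ℤ) (h : ¬(x = y ∧ y = z)) :
    (((y - z).sign : ℂ)) * ((x - z).sign : ℂ) + ((x - z).sign : ℂ) * ((x - y).sign : ℂ)
      - ((x - y).sign : ℂ) * ((y - z).sign : ℂ) = 1 := by
  have hxz : x - z = (x - y) + (y - z) := by ring
  rw [hxz]
  rcases lt_trichotomy (x - y) 0 with ht | ht | ht <;>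
    rcases lt_trichotomy (y - z) 0 with hu | hu | hu
  · rw [Int.sign_eq_neg_one_iff_neg.mpr ht, Int.sign_eq_neg_one_iff_neg.mpr hu,
      Int.sign_eq_neg_one_iff_neg.mpr (by omega)]; push_cast; ring
  · rw [Int.sign_eq_neg_one_iff_neg.mpr ht, hu, Int.sign_zero, add_zero,
      Int.sign_eq_neg_one_iff_neg.mpr ht]; push_cast; ring
  · rw [Int.sign_eq_neg_one_iff_neg.mpr ht, Int.sign_eq_one_iff_pos.mpr hu]
    push_cast; ring
  · rw [ht, Int.sign_zero, zero_add, Int.sign_eq_neg_one_iff_neg.mpr hu]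
    push_cast; ring
  · exact absurd ⟨by omega, by omega⟩ h
  · rw [ht, Int.sign_zero, zero_add, Int.sign_eq_one_iff_pos.mpr hu]; push_cast; ring
  · rw [Int.sign_eq_one_iff_pos.mpr ht, Int.sign_eq_neg_one_iff_neg.mpr hu]
    push_cast; ring
  · rw [Int.sign_eq_one_iff_pos.mpr ht, hu, Int.sign_zero, add_zero,
      Int.sign_eq_one_iff_pos.mpr ht]; push_cast; ring
  · rw [Int.sign_eq_one_iff_pos.mpr ht, Int.sign_eq_one_iff_pos.mpr hu,
      Int.sign_eq_one_iff_pos.mpr (by omega)]; push_cast; ring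

lemma key2 (x y z : ℤ) (h : ¬(x = y ∧ x = z)) :
    (((x - z).sign : ℂ)) * ((z - y).sign : ℂ) - ((x - y).sign : ℂ) * ((x - z).sign : ℂ)
      - ((x - y).sign : ℂ) * ((z - y).sign : ℂ) + 1 = 0 := by
  have hxy : x - y = (x - z) + (z - y) := by ring
  rw [hxy]
  rcases lt_trichotomy (x - z) 0 with ht | ht | ht <;>
    rcases lt_trichotomy (z - y) 0 with hu | hu | hu
  · rw [Int.sign_eq_neg_one_iff_neg.mpr ht, Int.sign_eq_neg_one_iff_neg.mpr hu,
      Int.sign_eq_neg_one_iff_neg.mpr (by omega)]; push_cast; ring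
  · rw [Int.sign_eq_neg_one_iff_neg.mpr ht, hu, Int.sign_zero, add_zero,
      Int.sign_eq_neg_one_iff_neg.mpr ht]; push_cast; ring
  · rw [Int.sign_eq_neg_one_iff_neg.mpr ht, Int.sign_eq_one_iff_pos.mpr hu]
    push_cast; ring
  · rw [ht, Int.sign_zero, zero_add, Int.sign_eq_neg_one_iff_neg.mpr hu]
    push_cast; ring
  · exact absurd ⟨by omega, by omega⟩ h
  · rw [ht, Int.sign_zero, zero_add, Int.sign_eq_one_iff_pos.mpr hu]; push_cast; ring
  · rw [Int.sign_eq_one_iff_pos.mpr ht, Int.sign_eq_neg_one_iff_neg.mpr hu]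
    push_cast; ring
  · rw [Int.sign_eq_one_iff_pos.mpr ht, hu, Int.sign_zero, add_zero,
      Int.sign_eq_one_iff_pos.mpr ht]; push_cast; ring
  · rw [Int.sign_eq_one_iff_pos.mpr ht, Int.sign_eq_one_iff_pos.mpr hu,
      Int.sign_eq_one_iff_pos.mpr (by omega)]; push_cast; ring

lemma sg_self (n : ℕ) (p : Fin n) : sg n p p = 0 := by simp [sg]

lemma sg_anti (n : ℕ) (p q : Fin n) : sg n q p = - sg n p q := by
  simp only [sg, Int.cast_id]
  rw [show (q:ℤ) - p = -((p:ℤ) - q) by ring, Int.sign_neg]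
  push_cast; ring

lemma fin_eq_iff (n : ℕ) (p q : Fin n) : p = q ↔ (p : ℤ) = (q : ℤ) := by
  constructor
  · rintro rfl; rfl
  · intro h; exact Fin.ext (by omega)

theorem DP_adjoint_YangBaxter_zero (n : ℕ) :
    (a'12 n * b'13 n - b'13 n * a'12 n) + (a'12 n * b'23 n - b'23 n * a'12 n) +
      (b'13 n * b'23 n - b'23 n * b'13 n) = 0 := by
  ext ⟨⟨p, q⟩, r⟩ ⟨⟨p', q'⟩, r'⟩
  simp only [Matrix.add_apply, Matrix.sub_apply, Matrix.zero_apply,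
    AB_apply, BA_apply, AC_apply, CA_apply, BC_apply, CB_apply]
  by_cases h1 : r = q ∧ q' = p ∧ r' = p' <;> by_cases h2 : r = p ∧ p' = q ∧ r' = q'
  · -- both conditions: everything collapses to a single index
    obtain ⟨e1, e2, e3⟩ := h1
    obtain ⟨f1, f2, f3⟩ := h2
    have hpq : p = q := f1.symm.trans e1
    simp only [if_pos (⟨e1, e2, e3⟩ : r = q ∧ q' = p ∧ r' = p'),
      if_pos (⟨f1, f2, f3⟩ : r = p ∧ p' = q ∧ r' = q')]
    rw [e2, f2, hpq]
    simp [sg_self]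
  · -- only P1
    obtain ⟨e1, e2, e3⟩ := h1
    have hne : ¬((p : ℤ) = (q : ℤ) ∧ (q : ℤ) = (p' : ℤ)) := by
      rintro ⟨u1, u2⟩
      have z1 : (r : ℤ) = (q : ℤ) := (fin_eq_iff n r q).mp e1
      have z2 : (q' : ℤ) = (p : ℤ) := (fin_eq_iff n q' p).mp e2
      have z3 : (r' : ℤ) = (p' : ℤ) := (fin_eq_iff n r' p').mp e3
      exact h2 ⟨(fin_eq_iff n r p).mpr (by omega), (fin_eq_iff n p' q).mpr (by omega),
        (fin_eq_iff n r' q').mpr (by omega)⟩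
    have k := key1 (p : ℤ) (q : ℤ) (p' : ℤ) hne
    simp only [if_pos (⟨e1, e2, e3⟩ : r = q ∧ q' = p ∧ r' = p'), if_neg h2]
    rw [sg_anti n p q]
    simp only [sg, Int.cast_id] at k ⊢
    linear_combination (1/4 : ℂ) * k
  · -- only P2
    obtain ⟨f1, f2, f3⟩ := h2
    have hne : ¬((p : ℤ) = (q : ℤ) ∧ (p : ℤ) = (q' : ℤ)) := by
      rintro ⟨u1, u2⟩
      have z1 : (r : ℤ) = (p : ℤ) := (fin_eq_iff n r p).mp f1
      have z2 : (p' : ℤ) = (q : ℤ) := (fin_eq_iff n p' q).mp f2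
      have z3 : (r' : ℤ) = (q' : ℤ) := (fin_eq_iff n r' q').mp f3
      exact h1 ⟨(fin_eq_iff n r q).mpr (by omega), (fin_eq_iff n q' p).mpr (by omega),
        (fin_eq_iff n r' p').mpr (by omega)⟩
    have k := key2 (p : ℤ) (q : ℤ) (q' : ℤ) hne
    simp only [if_pos (⟨f1, f2, f3⟩ : r = p ∧ p' = q ∧ r' = q'), if_neg h1]
    rw [sg_anti n q' q]
    simp only [sg, Int.cast_id] at k ⊢
    linear_combination (1/4 : ℂ) * k
  · simp [if_neg h1, if_neg h2]
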